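/- arXiv:0909.4925 — 3 statements merged into one kernel-verified Lean document; each statement's English description precedes it below -/
import Mathlib

section
/- Let χ be a Dirichlet character modulo q and r ≥ 1 an integer. For every s ∈ ℂ with Re(s) > 1, the (r−1)-st iterated derivative at s of the function s ↦ log L^{(r)}(s;χ) = ∑_p (log p)^{1−r} Li_r(χ(p) p^{−s}) equals (−1)^{r−1} · ∑_p Li_1(χ(p) p^{−s}), where Li_1(w) = −log(1−w) with the principal logarithm. -/
open Complex Filter Topology
open scoped Classical

/-- The multiplicity (order of vanishing) of `f` at `ρ`. -/
noncomputable def zeroMult (f : ℂ → ℂ) (ρ : ℂ) : ℕ :=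
  if h : AnalyticAt ℂ f ρ then (analyticOrderAt f ρ).toNat else 0

/-- The polylogarithm `Li_r(w) = ∑_{m≥1} w^m / m^r`. -/
noncomputable def Li (r : ℕ) (w : ℂ) : ℂ :=
  ∑' m : ℕ, w ^ (m + 1) / ((m + 1 : ℕ) : ℂ) ^ r

/-- `log L^{(r)}(s;χ) = ∑_p (log p)^{1-r} Li_r(χ(p) p^{-s})`. -/
noncomputable def logPolyL {q : ℕ} (χ : DirichletCharacter ℂ q) (r : ℕ) (s : ℂ) : ℂ :=
  ∑' p : Nat.Primes,
    (Real.log (p : ℕ) : ℂ) ^ (1 - (r : ℤ)) * Li r (χ ((p : ℕ) : ZMod q) * ((p : ℕ) : ℂ) ^ (-s))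

section Aux

variable {q : ℕ} (χ : DirichletCharacter ℂ q)

/-- The individual exponential term in the double series over primes `p` and powers `m`. -/
noncomputable def gterm (r : ℕ) (pm : Nat.Primes × ℕ) (w : ℂ) : ℂ :=
  (Real.log ((pm.1 : ℕ) : ℝ) : ℂ) ^ (1 - (r : ℤ)) *
    ((χ ((pm.1 : ℕ) : ZMod q)) ^ (pm.2 + 1) / ((pm.2 + 1 : ℕ) : ℂ) ^ r) *
    Complex.exp (-(((pm.2 + 1 : ℕ)) : ℂ) * (Real.log ((pm.1 : ℕ) : ℝ) : ℂ) * w)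

lemma prime_two_le (p : Nat.Primes) : (2 : ℝ) ≤ ((p : ℕ) : ℝ) := by
  exact_mod_cast p.2.two_le

lemma log_prime_pos (p : Nat.Primes) : 0 < Real.log ((p : ℕ) : ℝ) :=
  Real.log_pos (by linarith [prime_two_le p])

lemma gterm_eq (r : ℕ) (p : Nat.Primes) (m : ℕ) (s : ℂ) :
    gterm χ r (p, m) s =
      (Real.log ((p : ℕ) : ℝ) : ℂ) ^ (1 - (r : ℤ)) *
        ((χ ((p : ℕ) : ZMod q) * ((p : ℕ) : ℂ) ^ (-s)) ^ (m + 1) / ((m + 1 : ℕ) : ℂ) ^ r) := by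
  have hp0 : (((p : ℕ) : ℂ)) ≠ 0 := by
    exact_mod_cast (Nat.cast_ne_zero (R := ℂ)).mpr p.2.pos.ne'
  have hcpow : (((p : ℕ) : ℂ)) ^ (-s) =
      Complex.exp ((Real.log ((p : ℕ) : ℝ) : ℂ) * (-s)) := by
    rw [Complex.cpow_def_of_ne_zero hp0, Complex.natCast_log]
  have hpow : ((((p : ℕ) : ℂ)) ^ (-s)) ^ (m + 1) =
      Complex.exp (-(((m + 1 : ℕ)) : ℂ) * (Real.log ((p : ℕ) : ℝ) : ℂ) * s) := by
    rw [hcpow, ← Complex.exp_nat_mul]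
    congr 1
    push_cast
    ring
  simp only [gterm, mul_pow, hpow]
  ring

lemma gterm_norm_le (r : ℕ) (hr : 1 ≤ r) {σ : ℝ} (hσ : 1 ≤ σ) (pm : Nat.Primes × ℕ) {w : ℂ}
    (hw : σ ≤ w.re) :
    ‖gterm χ r pm w‖ ≤
      (Real.log 2) ^ (1 - (r : ℤ)) * (((pm.1 : ℕ) : ℝ) ^ (-σ) * (1 / 2 : ℝ) ^ pm.2) := by
  obtain ⟨p, m⟩ := pm
  have hp2 : (2 : ℝ) ≤ ((p : ℕ) : ℝ) := prime_two_le p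
  have hp0 : (0 : ℝ) < ((p : ℕ) : ℝ) := by linarith
  have hL2 : (0 : ℝ) < Real.log 2 := Real.log_pos (by norm_num)
  have hL : (0 : ℝ) < Real.log ((p : ℕ) : ℝ) := log_prime_pos p
  have hLle : Real.log 2 ≤ Real.log ((p : ℕ) : ℝ) :=
    Real.log_le_log (by norm_num) hp2
  rw [gterm]
  rw [norm_mul, norm_mul]
  -- first factor
  have h1 : ‖(Real.log ((p : ℕ) : ℝ) : ℂ) ^ (1 - (r : ℤ))‖ ≤ (Real.log 2) ^ (1 - (r : ℤ)) := by
    rw [← Complex.ofReal_zpow, Complex.norm_real, Real.norm_eq_abs,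
      abs_of_pos (zpow_pos hL _)]
    -- antitone in base for nonpositive exponent
    obtain ⟨n, hn⟩ : ∃ n : ℕ, 1 - (r : ℤ) = -(n : ℤ) := ⟨r - 1, by omega⟩
    rw [hn, zpow_neg, zpow_neg, zpow_natCast, zpow_natCast]
    exact one_div_le_one_div_of_le (pow_pos hL2 n) (pow_le_pow_left₀ hL2.le hLle n) |>.trans_eq
      (by rw [one_div]) |>.trans_eq' (by rw [one_div])
  -- second factor
  have h2 : ‖(χ ((p : ℕ) : ZMod q)) ^ (m + 1) / ((m + 1 : ℕ) : ℂ) ^ r‖ ≤ 1 := by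
    rw [norm_div]
    have hd : (1 : ℝ) ≤ ‖((m + 1 : ℕ) : ℂ) ^ r‖ := by
      rw [norm_pow]
      apply one_le_pow₀
      rw [Complex.norm_natCast]
      exact_mod_cast Nat.succ_le_succ (Nat.zero_le m)
    rw [div_le_one (lt_of_lt_of_le zero_lt_one hd)]
    refine le_trans ?_ hd
    rw [norm_pow]
    exact pow_le_one₀ (norm_nonneg _) (DirichletCharacter.norm_le_one χ _)
  -- third factor
  have h3 : ‖Complex.exp (-(((m + 1 : ℕ)) : ℂ) * (Real.log ((p : ℕ) : ℝ) : ℂ) * w)‖ ≤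
      ((p : ℕ) : ℝ) ^ (-σ) * (1 / 2 : ℝ) ^ m := by
    have hre : (-(((m + 1 : ℕ)) : ℂ) * (Real.log ((p : ℕ) : ℝ) : ℂ) * w).re =
        (-((m + 1 : ℝ) * Real.log ((p : ℕ) : ℝ))) * w.re := by
      have : -(((m + 1 : ℕ)) : ℂ) * (Real.log ((p : ℕ) : ℝ) : ℂ) =
          ((-((m + 1 : ℝ) * Real.log ((p : ℕ) : ℝ)) : ℝ) : ℂ) := by push_cast; ring
      rw [this, Complex.re_ofReal_mul]
    rw [Complex.norm_exp, hre]
    have step1 : Real.exp ((-((m + 1 : ℝ) * Real.log ((p : ℕ) : ℝ))) * w.re) ≤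
        Real.exp ((-((m + 1 : ℝ) * Real.log ((p : ℕ) : ℝ))) * σ) := by
      apply Real.exp_le_exp.mpr
      have hm1 : (0 : ℝ) ≤ (m + 1 : ℝ) * Real.log ((p : ℕ) : ℝ) := by positivity
      nlinarith
    refine step1.trans ?_
    have step2 : Real.exp ((-((m + 1 : ℝ) * Real.log ((p : ℕ) : ℝ))) * σ) =
        ((p : ℕ) : ℝ) ^ (-((m + 1 : ℝ) * σ)) := by
      rw [Real.rpow_def_of_pos hp0]
      congr 1
      ring
    rw [step2]
    have split : ((p : ℕ) : ℝ) ^ (-((m + 1 : ℝ) * σ)) =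
        ((p : ℕ) : ℝ) ^ (-σ) * ((p : ℕ) : ℝ) ^ (-((m : ℝ) * σ)) := by
      rw [← Real.rpow_add hp0]
      congr 1
      ring
    rw [split]
    apply mul_le_mul_of_nonneg_left _ (Real.rpow_nonneg hp0.le _)
    -- p ^ (-(m σ)) ≤ (1/2)^m
    have key : (2 : ℝ) ^ (m : ℝ) ≤ ((p : ℕ) : ℝ) ^ ((m : ℝ) * σ) := by
      calc (2 : ℝ) ^ (m : ℝ) ≤ (2 : ℝ) ^ ((m : ℝ) * σ) := by
            apply Real.rpow_le_rpow_of_exponent_le one_le_two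
            nlinarith [Nat.cast_nonneg (α := ℝ) m]
        _ ≤ ((p : ℕ) : ℝ) ^ ((m : ℝ) * σ) := by
            apply Real.rpow_le_rpow (by norm_num) hp2
            positivity
    have h2pos : (0 : ℝ) < (2 : ℝ) ^ (m : ℝ) := by positivity
    rw [Real.rpow_neg hp0.le]
    have : ((1 : ℝ) / 2) ^ m = ((2 : ℝ) ^ (m : ℝ))⁻¹ := by
      rw [Real.rpow_natCast, one_div, inv_pow]
    rw [this]
    exact inv_anti₀ h2pos key
  calc ‖(Real.log ((p : ℕ) : ℝ) : ℂ) ^ (1 - (r : ℤ))‖ *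
        ‖(χ ((p : ℕ) : ZMod q)) ^ (m + 1) / ((m + 1 : ℕ) : ℂ) ^ r‖ *
        ‖Complex.exp (-(((m + 1 : ℕ)) : ℂ) * (Real.log ((p : ℕ) : ℝ) : ℂ) * w)‖
      ≤ (Real.log 2) ^ (1 - (r : ℤ)) * 1 *
        (((p : ℕ) : ℝ) ^ (-σ) * (1 / 2 : ℝ) ^ m) := by
        apply mul_le_mul _ h3 (norm_nonneg _)
        · positivity
        · exact mul_le_mul h1 h2 (norm_nonneg _) (zpow_pos hL2 _).le
    _ = (Real.log 2) ^ (1 - (r : ℤ)) * (((p : ℕ) : ℝ) ^ (-σ) * (1 / 2 : ℝ) ^ m) := by ring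

lemma majorant_summable (r : ℕ) {σ : ℝ} (hσ : 1 < σ) :
    Summable (fun pm : Nat.Primes × ℕ =>
      (Real.log 2) ^ (1 - (r : ℤ)) * (((pm.1 : ℕ) : ℝ) ^ (-σ) * (1 / 2 : ℝ) ^ pm.2)) := by
  have h1 : Summable (fun p : Nat.Primes => ((p : ℕ) : ℝ) ^ (-σ)) :=
    Nat.Primes.summable_rpow.mpr (by linarith)
  have h2 : Summable (fun m : ℕ => (1 / 2 : ℝ) ^ m) :=
    summable_geometric_of_lt_one (by norm_num) (by norm_num)
  exact (h1.mul_of_nonneg h2 (fun p => Real.rpow_nonneg (by positivity) _)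
    (fun m => by positivity)).mul_left _

lemma gterm_summable (r : ℕ) (hr : 1 ≤ r) {s : ℂ} (hs : 1 < s.re) :
    Summable (fun pm : Nat.Primes × ℕ => gterm χ r pm s) := by
  apply Summable.of_norm_bounded (majorant_summable r hs)
  intro pm
  exact gterm_norm_le χ r hr hs.le pm le_rfl

lemma logPolyL_eq_tsum_gterm (r : ℕ) (hr : 1 ≤ r) {s : ℂ} (hs : 1 < s.re) :
    logPolyL χ r s = ∑' pm : Nat.Primes × ℕ, gterm χ r pm s := by
  rw [(gterm_summable χ r hr hs).tsum_prod]
  unfold logPolyL Li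
  apply tsum_congr
  intro p
  rw [← tsum_mul_left]
  apply tsum_congr
  intro m
  rw [gterm_eq]

lemma gterm_hasDerivAt (r : ℕ) (pm : Nat.Primes × ℕ) (w : ℂ) :
    HasDerivAt (gterm χ (r + 1) pm) (-(gterm χ r pm w)) w := by
  obtain ⟨p, m⟩ := pm
  have hL : ((Real.log ((p : ℕ) : ℝ) : ℂ)) ≠ 0 := Complex.ofReal_ne_zero.mpr (log_prime_pos p).ne'
  have hm : (((m + 1 : ℕ)) : ℂ) ≠ 0 := by exact_mod_cast Nat.succ_ne_zero m
  set L : ℂ := (Real.log ((p : ℕ) : ℝ) : ℂ) with hLdef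
  set M : ℂ := (((m + 1 : ℕ)) : ℂ) with hMdef
  set X : ℂ := (χ ((p : ℕ) : ZMod q)) ^ (m + 1) with hXdef
  have hzp : L ^ (1 - ((r + 1 : ℕ) : ℤ)) * L = L ^ (1 - (r : ℤ)) := by
    have h : (1 - ((r + 1 : ℕ) : ℤ)) = (1 - (r : ℤ)) - 1 := by push_cast; ring
    rw [h, zpow_sub_one₀ hL, mul_assoc, inv_mul_cancel₀ hL, mul_one]
  have hgt : ∀ k : ℕ, gterm χ k (p, m) =
      fun y => L ^ (1 - (k : ℤ)) * (X / M ^ k) * Complex.exp (-M * L * y) := fun k => rfl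
  simp only [hgt]
  have hd : HasDerivAt
      (fun y : ℂ => L ^ (1 - ((r + 1 : ℕ) : ℤ)) * (X / M ^ (r + 1)) * Complex.exp (-M * L * y))
      (L ^ (1 - ((r + 1 : ℕ) : ℤ)) * (X / M ^ (r + 1)) * (Complex.exp (-M * L * w) * (-M * L * 1)))
      w :=
    (((hasDerivAt_id w).const_mul (-M * L)).cexp).const_mul _
  have halg : L ^ (1 - ((r + 1 : ℕ) : ℤ)) * (X / M ^ (r + 1)) *
      (Complex.exp (-M * L * w) * (-M * L * 1)) =
      -(L ^ (1 - (r : ℤ)) * (X / M ^ r) * Complex.exp (-M * L * w)) := by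
    have hc : X / M ^ r / M * M = X / M ^ r := div_mul_cancel₀ _ hm
    calc L ^ (1 - ((r + 1 : ℕ) : ℤ)) * (X / M ^ (r + 1)) *
        (Complex.exp (-M * L * w) * (-M * L * 1))
        = -(L ^ (1 - ((r + 1 : ℕ) : ℤ)) * L * (X / M ^ r / M * M) *
            Complex.exp (-M * L * w)) := by
          rw [pow_succ M r, div_mul_eq_div_div]; ring
      _ = -(L ^ (1 - (r : ℤ)) * (X / M ^ r) * Complex.exp (-M * L * w)) := by rw [hzp, hc]
  rw [← halg]
  exact hd

lemma hasDerivAt_logPolyL (r : ℕ) (hr : 1 ≤ r) {s : ℂ} (hs : 1 < s.re) :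
    HasDerivAt (logPolyL χ (r + 1)) (-(logPolyL χ r s)) s := by
  set σ : ℝ := (1 + s.re) / 2 with hσdef
  have hσ1 : 1 < σ := by simp only [hσdef]; linarith
  have hσs : σ < s.re := by simp only [hσdef]; linarith
  set t : Set ℂ := {w : ℂ | σ < w.re} with htdef
  have ht : IsOpen t := isOpen_lt continuous_const Complex.continuous_re
  have htc : Convex ℝ t := convex_halfSpace_re_gt σ
  have hst : s ∈ t := hσs
  have key : HasDerivAt (fun z => ∑' pm : Nat.Primes × ℕ, gterm χ (r + 1) pm z)
      (∑' pm : Nat.Primes × ℕ, -(gterm χ r pm s)) s := by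
    apply hasDerivAt_tsum_of_isPreconnected (majorant_summable r hσ1) ht
      htc.isPreconnected (fun pm y _ => gterm_hasDerivAt χ r pm y) ?_ hst
      (gterm_summable χ (r + 1) (by omega) hs) hst
    intro pm y hy
    rw [norm_neg]
    exact gterm_norm_le χ r hr hσ1.le pm (le_of_lt hy)
  have hsum : (∑' pm : Nat.Primes × ℕ, -(gterm χ r pm s)) = -(logPolyL χ r s) := by
    rw [tsum_neg, logPolyL_eq_tsum_gterm χ r hr hs]
  rw [hsum] at key
  apply key.congr_of_eventuallyEq
  have hopen : IsOpen {w : ℂ | 1 < w.re} := isOpen_lt continuous_const Complex.continuous_re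
  filter_upwards [hopen.mem_nhds hs] with w hw
  exact logPolyL_eq_tsum_gterm χ (r + 1) (by omega) hw

lemma deriv_logPolyL (r : ℕ) (hr : 1 ≤ r) {s : ℂ} (hs : 1 < s.re) :
    deriv (logPolyL χ (r + 1)) s = -(logPolyL χ r s) :=
  (hasDerivAt_logPolyL χ r hr hs).deriv

lemma logPolyL_one_eq (s : ℂ) :
    logPolyL χ 1 s = ∑' p : Nat.Primes, Li 1 (χ ((p : ℕ) : ZMod q) * ((p : ℕ) : ℂ) ^ (-s)) := by
  unfold logPolyL
  apply tsum_congr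
  intro p
  norm_num

lemma iteratedDeriv_logPolyL_aux (n : ℕ) :
    ∀ s : ℂ, 1 < s.re →
      iteratedDeriv n (logPolyL χ (n + 1)) s = (-1 : ℂ) ^ n * logPolyL χ 1 s := by
  induction n with
  | zero => intro s hs; simp [iteratedDeriv_zero]
  | succ n ih =>
    intro s hs
    rw [iteratedDeriv_succ']
    have hopen : IsOpen {w : ℂ | 1 < w.re} := isOpen_lt continuous_const Complex.continuous_re
    have hev : deriv (logPolyL χ (n + 1 + 1)) =ᶠ[𝓝 s]
        (fun w => -(logPolyL χ (n + 1) w)) := by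
      filter_upwards [hopen.mem_nhds hs] with w hw
      exact deriv_logPolyL χ (n + 1) (by omega) hw
    rw [hev.iteratedDeriv_eq n]
    rw [iteratedDeriv_fun_neg, ih s hs]
    ring

end Aux

theorem iterated_deriv_logPolyL {q : ℕ} (χ : DirichletCharacter ℂ q)
    (r : ℕ) (hr : 1 ≤ r) (s : ℂ) (hs : 1 < s.re) :
    iteratedDeriv (r - 1) (fun w : ℂ => logPolyL χ r w) s =
      (-1 : ℂ) ^ (r - 1) *
        ∑' p : Nat.Primes, Li 1 (χ ((p : ℕ) : ZMod q) * ((p : ℕ) : ℂ) ^ (-s)) := by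
  obtain ⟨n, rfl⟩ : ∃ n, r = n + 1 := ⟨r - 1, by omega⟩
  have : (n + 1) - 1 = n := rfl
  rw [this, ← logPolyL_one_eq χ s]
  have := iteratedDeriv_logPolyL_aux χ n s hs
  simpa using this
end

section
/- Let χ be a Dirichlet character modulo q, let r ≥ 1 be an integer and z ∈ ℂ with Re(z) > 1. Then ∫_0^∞ (L′(z+x,χ)/L(z+x,χ)) · x^{r−1} dx = −(r−1)! · ∑_p (log p)^{1−r} Li_r(χ(p) p^{−z}), where L′ denotes the complex derivative of the Dirichlet L-function L(·,χ), the integral is over x ∈ (0,∞), and the sum runs over all rational primes p. -/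
open Complex Filter Topology
open scoped Classical

open Complex Filter Topology MeasureTheory Set Asymptotics
open scoped LSeries.notation
open ArithmeticFunction (vonMangoldt)

local notation "Λ" => vonMangoldt

lemma aux_integrableOn_pow_mul_exp {a : ℝ} (ha : 0 < a) (k : ℕ) :
    IntegrableOn (fun x : ℝ ↦ x ^ k * Real.exp (-(a * x))) (Set.Ioi 0) := by
  refine integrable_of_isBigO_exp_neg (half_pos ha) ?_ ?_
  · exact ((continuous_pow k).mul
      (Real.continuous_exp.comp (continuous_const.mul continuous_id).neg)).continuousOn
  · have h1 := (isLittleO_pow_exp_pos_mul_atTop k (half_pos ha)).isBigO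
    have h2 := h1.mul (isBigO_refl (fun x : ℝ ↦ Real.exp (-(a * x))) atTop)
    refine h2.congr' EventuallyEq.rfl ?_
    filter_upwards with x
    rw [← Real.exp_add]
    ring_nf

lemma aux_real_integral {a : ℝ} (ha : 0 < a) (k : ℕ) :
    ∫ x in Set.Ioi (0:ℝ), x ^ k * Real.exp (-(a * x)) = k.factorial / a ^ (k+1) := by
  have h := Real.integral_rpow_mul_exp_neg_mul_Ioi (a := ((k:ℝ)+1)) (by positivity) ha
  rw [show ((k:ℝ)+1) - 1 = (k:ℝ) by ring] at h
  simp_rw [Real.rpow_natCast] at h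
  rw [h, show ((k:ℝ)+1) = ((k+1:ℕ):ℝ) by push_cast; ring, Real.rpow_natCast]
  rw [show ((k+1:ℕ):ℝ) = (k:ℝ)+1 by push_cast; ring, Real.Gamma_nat_eq_factorial]
  rw [div_pow, one_pow, one_div, inv_mul_eq_div]

lemma aux_cplx_integrable {a : ℝ} (ha : 0 < a) (k : ℕ) :
    IntegrableOn (fun x : ℝ ↦ (x:ℂ) ^ k * Complex.exp (-((a:ℂ) * (x:ℂ)))) (Set.Ioi 0) := by
  refine ((aux_integrableOn_pow_mul_exp ha k).mono' ?_ ?_)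
  · exact (((continuous_ofReal.pow k).mul
      (Complex.continuous_exp.comp (by continuity))).aestronglyMeasurable)
  · filter_upwards [ae_restrict_mem measurableSet_Ioi] with x hx
    rw [norm_mul, norm_pow, Complex.norm_exp]
    simp only [Complex.norm_real, Real.norm_eq_abs, abs_of_pos (mem_Ioi.mp hx)]
    rw [show (-((a:ℂ) * (x:ℂ))) = ((-(a*x) : ℝ) : ℂ) by push_cast; ring, Complex.ofReal_re]

lemma aux_cplx_integral {a : ℝ} (ha : 0 < a) (k : ℕ) :
    ∫ x in Set.Ioi (0:ℝ), (x:ℂ) ^ k * Complex.exp (-((a:ℂ) * (x:ℂ)))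
      = k.factorial / (a:ℂ) ^ (k+1) := by
  have h := Complex.integral_cpow_mul_exp_neg_mul_Ioi (a := ((k:ℂ)+1))
    (by simp; positivity) ha
  rw [show ((k:ℂ)+1) - 1 = (k:ℂ) by ring] at h
  simp_rw [Complex.cpow_natCast] at h
  rw [h, show ((k:ℂ)+1) = ((k+1:ℕ):ℂ) by push_cast; ring, Complex.cpow_natCast]
  rw [show ((k+1:ℕ):ℂ) = (k:ℂ)+1 by push_cast; ring, Complex.Gamma_nat_eq_factorial]
  rw [div_pow, one_pow, one_div, inv_mul_eq_div]

lemma aux_cast_pow_cpow (p : ℕ) (hp : 0 < p) (n : ℕ) (s : ℂ) :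
    ((p ^ n : ℕ) : ℂ) ^ s = ((p:ℂ) ^ s) ^ n := by
  have hlog : Complex.log ((p:ℕ):ℂ) = ((Real.log p : ℝ) : ℂ) := by
    rw [← Complex.ofReal_natCast, Complex.ofReal_log (Nat.cast_nonneg p)]
  rw [← Complex.cpow_nat_mul]
  push_cast
  have him : (Complex.log ((p:ℕ):ℂ) * (n:ℂ)).im = 0 := by
    rw [hlog, ← Complex.ofReal_natCast, ← Complex.ofReal_mul, Complex.ofReal_im]
  rw [← Complex.cpow_natCast (p:ℂ) n, ← Complex.cpow_mul]
  · rw [him]; exact neg_lt_zero.mpr Real.pi_pos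
  · rw [him]; exact Real.pi_pos.le

theorem integral_logDeriv_LFunction {q : ℕ} [NeZero q] (χ : DirichletCharacter ℂ q)
    (r : ℕ) (hr : 1 ≤ r) (z : ℂ) (hz : 1 < z.re) :
    ∫ x in Set.Ioi (0 : ℝ),
        deriv (DirichletCharacter.LFunction χ) (z + (x : ℂ)) /
            DirichletCharacter.LFunction χ (z + (x : ℂ)) * (x : ℂ) ^ (r - 1) =
      -(((r - 1).factorial : ℂ) * logPolyL χ r z) := by
  set k := r - 1 with hkdef
  have hrk : r = k + 1 := by omega
  set F : ℕ → ℝ → ℂ := fun n x ↦ -(LSeries.term (↗χ * ↗Λ) (z + (x:ℂ)) n * (x:ℂ) ^ k) with hF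
  set g : ℕ → ℂ := fun n ↦
    χ (n : ZMod q) * (Λ n : ℂ) * (n:ℂ) ^ (-z) * (((Real.log n : ℝ) : ℂ) ^ (k+1))⁻¹ with hg
  have hs : ∀ x : ℝ, x ∈ Set.Ioi (0:ℝ) → 1 < (z + (x:ℂ)).re := by
    intro x hx
    simp only [Complex.add_re, Complex.ofReal_re]
    have := mem_Ioi.mp hx
    linarith
  -- Step 1: pointwise identity for the integrand
  have step1 : Set.EqOn
      (fun x : ℝ ↦ deriv (DirichletCharacter.LFunction χ) (z + (x:ℂ)) /
          DirichletCharacter.LFunction χ (z + (x:ℂ)) * (x:ℂ) ^ k)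
      (fun x : ℝ ↦ ∑' n, F n x) (Set.Ioi 0) := by
    intro x hx
    have hsx := hs x hx
    simp only
    rw [DirichletCharacter.deriv_LFunction_eq_deriv_LSeries χ hsx,
        DirichletCharacter.LFunction_eq_LSeries χ hsx]
    have h2 : deriv (LSeries ↗χ) (z + (x:ℂ)) / LSeries ↗χ (z + (x:ℂ))
        = -LSeries (↗χ * ↗Λ) (z + (x:ℂ)) := by
      rw [DirichletCharacter.LSeries_twist_vonMangoldt_eq χ hsx]; ring
    rw [h2, LSeries, neg_mul, ← tsum_mul_right, ← tsum_neg]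
  -- Summability of Λ n / n ^ z.re
  have hzre : (1:ℝ) < ((z.re : ℂ)).re := by simpa using hz
  have hΛz : LSeriesSummable ↗Λ (z.re : ℂ) :=
    ArithmeticFunction.LSeriesSummable_vonMangoldt hzre
  have hw : Summable (fun n : ℕ ↦ Λ n / (n:ℝ) ^ z.re) := by
    refine (hΛz.map Complex.reCLM Complex.reCLM.continuous).congr fun n ↦ ?_
    rcases eq_or_ne n 0 with rfl | hn
    · simp [LSeries.term]
    · simp only [Function.comp_apply, Complex.reCLM_apply, LSeries.term_of_ne_zero hn]
      rw [show ((n:ℂ))^((z.re:ℝ):ℂ) = (((n:ℝ)^z.re : ℝ) : ℂ) by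
        rw [← Complex.ofReal_natCast, Complex.ofReal_cpow (Nat.cast_nonneg n)]]
      rw [← Complex.ofReal_div, Complex.ofReal_re]
  have hw_nonneg : ∀ n : ℕ, 0 ≤ Λ n / (n:ℝ) ^ z.re := fun n ↦
    div_nonneg ArithmeticFunction.vonMangoldt_nonneg (Real.rpow_nonneg (Nat.cast_nonneg n) _)
  -- F vanishes for n ≤ 1
  have hF01 : ∀ n : ℕ, n < 2 → F n = fun _ ↦ 0 := by
    intro n hn
    funext x
    interval_cases n
    · simp [hF]
    · simp [hF, LSeries.term_of_ne_zero one_ne_zero, ArithmeticFunction.vonMangoldt_apply_one]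
  have hg01 : ∀ n : ℕ, n < 2 → g n = 0 := by
    intro n hn
    interval_cases n
    · simp [hg]
    · simp [hg, ArithmeticFunction.vonMangoldt_apply_one]
  -- rewrite F n for n ≥ 2
  have hFeq : ∀ n : ℕ, 2 ≤ n → ∀ x : ℝ, F n x
      = -(χ (n : ZMod q) * (Λ n : ℂ) * (n:ℂ) ^ (-z)) *
        ((x:ℂ) ^ k * Complex.exp (-(((Real.log n : ℝ):ℂ) * (x:ℂ)))) := by
    intro n hn x
    have hn0 : (n:ℂ) ≠ 0 := Nat.cast_ne_zero.mpr (by omega)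
    have hsplit : (n:ℂ) ^ (-(z + (x:ℂ))) =
        (n:ℂ) ^ (-z) * Complex.exp (-(((Real.log n : ℝ):ℂ) * (x:ℂ))) := by
      rw [neg_add, Complex.cpow_add _ _ hn0]
      congr 1
      rw [Complex.cpow_def_of_ne_zero hn0,
        show Complex.log ((n:ℕ):ℂ) = ((Real.log n : ℝ):ℂ) by
          rw [← Complex.ofReal_natCast, Complex.ofReal_log (Nat.cast_nonneg n)]]
      ring_nf
    simp only [hF]
    rw [LSeries.term_of_ne_zero (by omega : n ≠ 0), div_eq_mul_inv, ← Complex.cpow_neg, hsplit]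
    simp only [Pi.mul_apply]
    ring
  -- integrability of each F n
  have hF_int : ∀ n : ℕ, IntegrableOn (F n) (Set.Ioi (0:ℝ)) := by
    intro n
    rcases lt_or_ge n 2 with hn | hn
    · rw [hF01 n hn]
      exact integrable_zero _ _ _
    · have ha : 0 < Real.log n := Real.log_pos (by exact_mod_cast hn)
      exact ((aux_cplx_integrable ha k).const_mul _).congr
        (ae_of_all _ fun x ↦ (hFeq n hn x).symm)
  -- norm bound
  have hnormF : ∀ n : ℕ, 2 ≤ n → ∀ x ∈ Set.Ioi (0:ℝ),
      ‖F n x‖ ≤ (Λ n / (n:ℝ) ^ z.re) * (x ^ k * Real.exp (-(Real.log n * x))) := by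
    intro n hn x hx
    have hx0 := mem_Ioi.mp hx
    have hnpos : (0:ℝ) < n := by exact_mod_cast (by omega : 0 < n)
    rw [hFeq n hn x]
    simp only [norm_neg, norm_mul, norm_pow]
    rw [Complex.norm_exp,
      show (-(((Real.log n : ℝ):ℂ) * (x:ℂ))) = ((-(Real.log n * x) : ℝ) : ℂ) by push_cast; ring,
      Complex.ofReal_re]
    rw [Complex.norm_natCast_cpow_of_pos (by omega : 0 < n), Complex.neg_re]
    simp only [Complex.norm_real, Real.norm_eq_abs, abs_of_pos hx0,
      _root_.abs_of_nonneg (ArithmeticFunction.vonMangoldt_nonneg (n := n))]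
    rw [Real.rpow_neg hnpos.le]
    have hχ1 : ‖χ (n : ZMod q)‖ ≤ 1 := χ.norm_le_one _
    have hΛn : (0:ℝ) ≤ Λ n := ArithmeticFunction.vonMangoldt_nonneg
    calc ‖χ (n : ZMod q)‖ * Λ n * ((n:ℝ) ^ z.re)⁻¹ * (x ^ k * Real.exp (-(Real.log n * x)))
        ≤ 1 * Λ n * ((n:ℝ) ^ z.re)⁻¹ * (x ^ k * Real.exp (-(Real.log n * x))) := by
          gcongr
      _ = (Λ n / (n:ℝ) ^ z.re) * (x ^ k * Real.exp (-(Real.log n * x))) := by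
          rw [one_mul, div_eq_mul_inv]
  -- summability of the integrals of the norms
  have hF_sum : Summable (fun n : ℕ ↦ ∫ x in Set.Ioi (0:ℝ), ‖F n x‖) := by
    set C : ℝ := k.factorial / (Real.log 2) ^ (k+1) with hC
    have hC0 : 0 ≤ C := by
      apply div_nonneg (Nat.cast_nonneg _)
      positivity
    refine Summable.of_nonneg_of_le
      (fun n ↦ integral_nonneg fun x ↦ norm_nonneg _) (fun n ↦ ?_) (hw.mul_left C)
    rcases lt_or_ge n 2 with hn | hn
    · rw [hF01 n hn]
      simp only [norm_zero, integral_zero]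
      exact mul_nonneg hC0 (hw_nonneg n)
    · have ha : 0 < Real.log n := Real.log_pos (by exact_mod_cast hn)
      have h1 : ∫ x in Set.Ioi (0:ℝ), ‖F n x‖
          ≤ ∫ x in Set.Ioi (0:ℝ), (Λ n / (n:ℝ) ^ z.re) * (x ^ k * Real.exp (-(Real.log n * x))) := by
        refine setIntegral_mono_on (hF_int n).norm
          ((aux_integrableOn_pow_mul_exp ha k).const_mul _) measurableSet_Ioi ?_
        exact fun x hx ↦ hnormF n hn x hx
      have h2 : ∫ x in Set.Ioi (0:ℝ), (Λ n / (n:ℝ) ^ z.re) * (x ^ k * Real.exp (-(Real.log n * x)))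
          = (Λ n / (n:ℝ) ^ z.re) * (k.factorial / (Real.log n) ^ (k+1)) := by
        rw [integral_const_mul, aux_real_integral ha k]
      refine h1.trans ?_
      rw [h2, mul_comm C]
      have hlog2 : (0:ℝ) < Real.log 2 := Real.log_pos one_lt_two
      have hlogle : Real.log 2 ≤ Real.log n := Real.log_le_log (by norm_num) (by exact_mod_cast hn)
      have hwn := hw_nonneg n
      have hpowle : Real.log 2 ^ (k+1) ≤ Real.log (n:ℝ) ^ (k+1) := by
        gcongr
      have hpowpos : (0:ℝ) < Real.log 2 ^ (k+1) := by positivity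
      rw [hC]
      gcongr
  -- swap integral and sum
  rw [setIntegral_congr_fun measurableSet_Ioi step1,
    ← integral_tsum_of_summable_integral_norm hF_int hF_sum]
  -- value of each integral
  have hGn : ∀ n : ℕ, (∫ x in Set.Ioi (0:ℝ), F n x) = -(k.factorial : ℂ) * g n := by
    intro n
    rcases lt_or_ge n 2 with hn | hn
    · rw [hF01 n hn, hg01 n hn]
      simp
    · have ha : 0 < Real.log n := Real.log_pos (by exact_mod_cast hn)
      rw [show (fun x : ℝ ↦ F n x) = fun x : ℝ ↦
          -(χ (n : ZMod q) * (Λ n : ℂ) * (n:ℂ) ^ (-z)) *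
            ((x:ℂ) ^ k * Complex.exp (-(((Real.log n : ℝ):ℂ) * (x:ℂ))))
          from funext (hFeq n hn)]
      rw [integral_const_mul, aux_cplx_integral ha k]
      simp only [hg]
      field_simp
  rw [tsum_congr hGn, tsum_mul_left]
  -- final rearrangement of the sum
  have hg_sum : Summable g := by
    refine Summable.of_norm_bounded
      (g := fun n ↦ ((Real.log 2) ^ (k+1))⁻¹ * (Λ n / (n:ℝ) ^ z.re)) ((hw.mul_left _)) fun n ↦ ?_
    rcases lt_or_ge n 2 with hn | hn
    · rw [hg01 n hn, norm_zero]
      exact mul_nonneg (by positivity) (hw_nonneg n)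
    · have ha : 0 < Real.log n := Real.log_pos (by exact_mod_cast hn)
      have hnpos : (0:ℝ) < n := by exact_mod_cast (by omega : 0 < n)
      simp only [hg]
      rw [norm_mul, norm_mul, norm_mul, norm_inv, norm_pow]
      rw [Complex.norm_natCast_cpow_of_pos (by omega : 0 < n), Complex.neg_re]
      simp only [Complex.norm_real, Real.norm_eq_abs, abs_of_pos ha,
        _root_.abs_of_nonneg (ArithmeticFunction.vonMangoldt_nonneg (n := n))]
      rw [Real.rpow_neg hnpos.le]
      have hχ1 : ‖χ (n : ZMod q)‖ ≤ 1 := χ.norm_le_one _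
      have hΛn : (0:ℝ) ≤ Λ n := ArithmeticFunction.vonMangoldt_nonneg
      have hlog2 : (0:ℝ) < Real.log 2 := Real.log_pos one_lt_two
      have hlogle : Real.log 2 ≤ Real.log n := Real.log_le_log (by norm_num) (by exact_mod_cast hn)
      have hinv : ((Real.log n) ^ (k+1))⁻¹ ≤ ((Real.log 2) ^ (k+1))⁻¹ := by
        gcongr
      calc ‖χ (n : ZMod q)‖ * Λ n * ((n:ℝ) ^ z.re)⁻¹ * ((Real.log n) ^ (k+1))⁻¹
          ≤ 1 * Λ n * ((n:ℝ) ^ z.re)⁻¹ * ((Real.log 2) ^ (k+1))⁻¹ := by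
            gcongr
        _ = ((Real.log 2) ^ (k+1))⁻¹ * (Λ n / (n:ℝ) ^ z.re) := by
            rw [one_mul, div_eq_mul_inv]; ring
  have hsupp : Function.support g ⊆ {n | IsPrimePow n} := by
    intro n hn
    by_contra h
    apply hn
    simp only [hg, ArithmeticFunction.vonMangoldt_eq_zero_iff.mpr h]
    push_cast
    ring
  have hfinal : (∑' n : ℕ, g n) = logPolyL χ r z := by
    rw [tsum_eq_tsum_primes_of_support_subset_prime_powers hg_sum hsupp, logPolyL]
    refine tsum_congr fun p ↦ ?_
    have hp : (p:ℕ).Prime := p.prop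
    have hlogp : (0:ℝ) < Real.log p := Real.log_pos (by exact_mod_cast hp.one_lt)
    have hlogpC : ((Real.log p : ℝ) : ℂ) ≠ 0 := by
      exact_mod_cast hlogp.ne'
    rw [Li, ← tsum_mul_left]
    refine tsum_congr fun j ↦ ?_
    simp only [hg]
    rw [show (((p:ℕ) ^ (j+1) : ℕ) : ZMod q) = (((p:ℕ) : ZMod q)) ^ (j+1) by push_cast; ring,
      map_pow,
      ArithmeticFunction.vonMangoldt_apply_pow (Nat.succ_ne_zero j),
      ArithmeticFunction.vonMangoldt_apply_prime hp,
      aux_cast_pow_cpow (p:ℕ) hp.pos (j+1) (-z),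
      show Real.log (((p:ℕ) ^ (j+1) : ℕ) : ℝ) = ((j+1 : ℕ) : ℝ) * Real.log (p:ℕ) by
        push_cast; rw [Real.log_pow]; push_cast; ring]
    rw [show ((((j+1 : ℕ) : ℝ) * Real.log (p:ℕ) : ℝ) : ℂ)
        = ((j+1 : ℕ) : ℂ) * ((Real.log (p:ℕ) : ℝ) : ℂ) by push_cast; ring]
    rw [mul_pow, mul_inv, mul_pow]
    rw [show (1 - (r:ℤ)) = 1 - ((k:ℤ) + 1) by rw [hrk]; push_cast; ring]
    rw [show ((Real.log (p:ℕ) : ℝ) : ℂ) ^ (1 - ((k:ℤ)+1))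
        = ((Real.log (p:ℕ) : ℝ) : ℂ) * ((((Real.log (p:ℕ) : ℝ) : ℂ)) ^ (k+1))⁻¹ by
      rw [zpow_sub₀ hlogpC]
      rw [show ((k:ℤ)+1) = ((k+1 : ℕ) : ℤ) by push_cast; ring, zpow_natCast, zpow_one,
        div_eq_mul_inv]]
    rw [hrk]
    field_simp
  rw [hfinal, hkdef]
  ring
end

section
/- Let χ be a Dirichlet character modulo q, let r ≥ 1 be an integer and s ∈ ℂ with Re(s) > 1. Then the family over rational primes p of the numbers (log p)^{1−r} Li_r(χ(p) p^{−s}) is absolutely summable; consequently the infinite product defining the depth-r poly-L-function L^{(r)}(s;χ) = ∏_p exp((log p)^{1−r} Li_r(χ(p) p^{−s})) converges absolutely for Re(s) > 1. -/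
open Complex Filter Topology
open scoped Classical

lemma Li_norm_le (r : ℕ) (w : ℂ) (hw : ‖w‖ ≤ 1/2) : ‖Li r w‖ ≤ 2 * ‖w‖ := by
  have hw1 : ‖w‖ < 1 := lt_of_le_of_lt hw (by norm_num)
  have hbound : ∀ m : ℕ, ‖w ^ (m + 1) / ((m + 1 : ℕ) : ℂ) ^ r‖ ≤ ‖w‖ * ‖w‖ ^ m := by
    intro m
    rw [norm_div, pow_succ, mul_comm, norm_mul]
    have h1 : (1:ℝ) ≤ ‖((m + 1 : ℕ) : ℂ) ^ r‖ := by
      rw [norm_pow]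
      apply one_le_pow₀
      simp only [Complex.norm_natCast]
      exact_mod_cast Nat.succ_le_succ (Nat.zero_le m)
    calc ‖w‖ * ‖w ^ m‖ / ‖((m + 1 : ℕ) : ℂ) ^ r‖ ≤ ‖w‖ * ‖w ^ m‖ / 1 := by
          apply div_le_div_of_nonneg_left _ one_pos h1 |>.trans_eq rfl
          · positivity
      _ = ‖w‖ * ‖w‖ ^ m := by rw [div_one, norm_pow]
  have hgeo : Summable (fun m : ℕ => ‖w‖ * ‖w‖ ^ m) :=
    (summable_geometric_of_lt_one (norm_nonneg w) hw1).mul_left _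
  have hsum : Summable (fun m : ℕ => w ^ (m + 1) / ((m + 1 : ℕ) : ℂ) ^ r) :=
    Summable.of_norm (hgeo.of_nonneg_of_le (fun _ => norm_nonneg _) hbound)
  calc ‖Li r w‖ ≤ ∑' m : ℕ, ‖w ^ (m + 1) / ((m + 1 : ℕ) : ℂ) ^ r‖ := norm_tsum_le_tsum_norm hsum.norm
    _ ≤ ∑' m : ℕ, ‖w‖ * ‖w‖ ^ m := Summable.tsum_le_tsum hbound hsum.norm hgeo
    _ = ‖w‖ * (1 - ‖w‖)⁻¹ := by rw [tsum_mul_left, tsum_geometric_of_lt_one (norm_nonneg w) hw1]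
    _ ≤ ‖w‖ * 2 := by
        apply mul_le_mul_of_nonneg_left _ (norm_nonneg w)
        rw [inv_le_comm₀ (by linarith) (by norm_num)]
        linarith
    _ = 2 * ‖w‖ := mul_comm _ _

theorem polyL_summable_multipliable {q : ℕ} (χ : DirichletCharacter ℂ q)
    (r : ℕ) (hr : 1 ≤ r) (s : ℂ) (hs : 1 < s.re) :
    Summable (fun p : Nat.Primes =>
      ‖(Real.log (p : ℕ) : ℂ) ^ (1 - (r : ℤ)) *
        Li r (χ ((p : ℕ) : ZMod q) * ((p : ℕ) : ℂ) ^ (-s))‖) ∧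
    Multipliable (fun p : Nat.Primes =>
      Complex.exp ((Real.log (p : ℕ) : ℂ) ^ (1 - (r : ℤ)) *
        Li r (χ ((p : ℕ) : ZMod q) * ((p : ℕ) : ℂ) ^ (-s)))) := by
  set C : ℝ := (Real.log 2) ^ (1 - (r : ℤ)) with hC
  have hlog2 : (0:ℝ) < Real.log 2 := Real.log_pos (by norm_num)
  have key : ∀ p : Nat.Primes,
      ‖(Real.log (p : ℕ) : ℂ) ^ (1 - (r : ℤ)) *
        Li r (χ ((p : ℕ) : ZMod q) * ((p : ℕ) : ℂ) ^ (-s))‖ ≤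
      C * 2 * ((p : ℕ) : ℝ) ^ (-s.re) := by
    intro p
    have hp2 : (2:ℝ) ≤ ((p : ℕ) : ℝ) := by exact_mod_cast p.2.two_le
    have hp1 : (1:ℝ) < ((p : ℕ) : ℝ) := lt_of_lt_of_le one_lt_two hp2
    have hp0 : (0:ℝ) < ((p : ℕ) : ℝ) := lt_trans one_pos hp1
    -- norm of w
    have hwnorm : ‖χ ((p : ℕ) : ZMod q) * ((p : ℕ) : ℂ) ^ (-s)‖ ≤ ((p : ℕ) : ℝ) ^ (-s.re) := by
      rw [norm_mul]
      have h1 : ‖((p : ℕ) : ℂ) ^ (-s)‖ = ((p : ℕ) : ℝ) ^ (-s.re) := by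
        rw [Complex.norm_natCast_cpow_of_pos (by exact_mod_cast hp0)]
        simp
      rw [h1]
      calc ‖χ ((p : ℕ) : ZMod q)‖ * ((p : ℕ) : ℝ) ^ (-s.re)
          ≤ 1 * ((p : ℕ) : ℝ) ^ (-s.re) := by
            apply mul_le_mul_of_nonneg_right (χ.norm_le_one _) (Real.rpow_nonneg hp0.le _)
        _ = ((p : ℕ) : ℝ) ^ (-s.re) := one_mul _
    have hwhalf : ‖χ ((p : ℕ) : ZMod q) * ((p : ℕ) : ℂ) ^ (-s)‖ ≤ 1/2 := by
      refine hwnorm.trans ?_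
      have : ((p : ℕ) : ℝ) ^ (-s.re) ≤ ((p : ℕ) : ℝ) ^ (-1 : ℝ) :=
        Real.rpow_le_rpow_of_exponent_le hp1.le (by linarith)
      refine this.trans ?_
      rw [Real.rpow_neg_one]
      rw [inv_le_comm₀ hp0 (by norm_num)]
      linarith
    -- norm of log factor
    have hlogp : Real.log 2 ≤ Real.log ((p : ℕ) : ℝ) := Real.log_le_log (by norm_num) hp2
    have hlogp0 : (0:ℝ) < Real.log ((p : ℕ) : ℝ) := lt_of_lt_of_le hlog2 hlogp
    have hznorm : ‖(Real.log (p : ℕ) : ℂ) ^ (1 - (r : ℤ))‖ = (Real.log ((p : ℕ) : ℝ)) ^ (1 - (r : ℤ)) := by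
      rw [norm_zpow, Complex.norm_real, Real.norm_eq_abs, abs_of_pos hlogp0]
    have hzle : (Real.log ((p : ℕ) : ℝ)) ^ (1 - (r : ℤ)) ≤ C := by
      rw [hC]
      obtain ⟨k, hk⟩ : ∃ k : ℕ, r = k + 1 := ⟨r - 1, by omega⟩
      have he : (1 - (r : ℤ)) = -(k : ℤ) := by rw [hk]; push_cast; ring
      rw [he, zpow_neg, zpow_neg, zpow_natCast, zpow_natCast]
      apply inv_anti₀ (pow_pos hlog2 k)
      exact pow_le_pow_left₀ hlog2.le hlogp k
    rw [norm_mul, hznorm]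
    calc (Real.log ((p : ℕ) : ℝ)) ^ (1 - (r : ℤ)) *
          ‖Li r (χ ((p : ℕ) : ZMod q) * ((p : ℕ) : ℂ) ^ (-s))‖
        ≤ C * (2 * ((p : ℕ) : ℝ) ^ (-s.re)) := by
          apply mul_le_mul hzle ((Li_norm_le r _ hwhalf).trans ?_)
            (norm_nonneg _) (le_of_lt (by positivity))
          exact mul_le_mul_of_nonneg_left hwnorm (by norm_num)
      _ = C * 2 * ((p : ℕ) : ℝ) ^ (-s.re) := by ring
  have hsummaj : Summable (fun p : Nat.Primes => C * 2 * ((p : ℕ) : ℝ) ^ (-s.re)) :=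
    (Nat.Primes.summable_rpow.mpr (by linarith)).mul_left _
  have hsum : Summable (fun p : Nat.Primes =>
      ‖(Real.log (p : ℕ) : ℂ) ^ (1 - (r : ℤ)) *
        Li r (χ ((p : ℕ) : ZMod q) * ((p : ℕ) : ℂ) ^ (-s))‖) :=
    hsummaj.of_nonneg_of_le (fun _ => norm_nonneg _) key
  refine ⟨hsum, ?_⟩
  have h2 : Summable (fun p : Nat.Primes =>
      (Real.log (p : ℕ) : ℂ) ^ (1 - (r : ℤ)) *
        Li r (χ ((p : ℕ) : ZMod q) * ((p : ℕ) : ℂ) ^ (-s))) := Summable.of_norm hsum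
  have := h2.hasSum.exp
  have heq : (NormedSpace.exp ∘ fun p : Nat.Primes =>
      (Real.log (p : ℕ) : ℂ) ^ (1 - (r : ℤ)) *
        Li r (χ ((p : ℕ) : ZMod q) * ((p : ℕ) : ℂ) ^ (-s))) = fun p : Nat.Primes =>
      Complex.exp ((Real.log (p : ℕ) : ℂ) ^ (1 - (r : ℤ)) *
        Li r (χ ((p : ℕ) : ZMod q) * ((p : ℕ) : ℂ) ^ (-s))) := by
    funext p
    simp [Function.comp, Complex.exp_eq_exp_ℂ]
  exact ⟨_, heq ▸ this⟩
end
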